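/- Specializing the master system parameters to β = η = −1, δ = h, ε = 1/α recovers, after clearing denominators and rescaling, the three quad-equations of system (dRTL+ m): equation (I) of the master system becomes (up to an overall nonzero factor) hλ(XY+UV) − hλ²XU − (λ²+h)XV + λ²YV = 0 when additionally γ = 0; similarly master equations (II) and (III) with γ = 0 become αλ(XY+UV) − αλ²XU − (λ²+α)XV + λ²YV = 0 (up to multiplying by α and sign conventions) and (h−α)λ(XY+UV) − h(λ²+α)XU − (λ²+h)XV + α(λ²+h)YU + (λ²+α)YV = 0 respectively, i.e., each specialized master polynomial is a nonzero constant multiple of the corresponding (dRTL+ m) polynomial. -/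
import Mathlib


/-- Specializing the parameters of the master system to `γ = 0`, `β = η = −1`,
`δ = h`, `ε = 1/α` recovers the three quad-equations of system (dRTL+ m):
each specialized master polynomial is a nonzero constant multiple of the
corresponding (dRTL+ m) polynomial, as a polynomial function of
`X, Y, U, V, λ`. -/
theorem master_specializes_to_dRTLm_system
    (α h : ℂ) (hα : α ≠ 0) (hh : h ≠ 0) :
    ∃ cI cII cIII : ℂ, cI ≠ 0 ∧ cII ≠ 0 ∧ cIII ≠ 0 ∧
      ∀ X Y U V lam : ℂ,
        -- master (I) with β = −1, γ = 0, δ = h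
        ((h - (-1) * 0) * lam * (X * Y + U * V) +
            (-1) * h * (lam ^ 2 - 0) * X * U + ((-1) * lam ^ 2 - h) * X * V +
            0 * ((-1) * lam ^ 2 - h) * Y * U + (lam ^ 2 - 0) * Y * V
          = cI * (h * lam * (X * Y + U * V) - h * lam ^ 2 * X * U -
              (lam ^ 2 + h) * X * V + lam ^ 2 * Y * V)) ∧
        -- master (II) with γ = 0, ε = 1/α, η = −1
        (((-1) - 0 * (1 / α)) * lam * (X * Y + U * V) +
            (lam ^ 2 - 0) * X * U + ((1 / α) * lam ^ 2 - (-1)) * X * V +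
            0 * ((1 / α) * lam ^ 2 - (-1)) * Y * U +
            (1 / α) * (-1) * (lam ^ 2 - 0) * Y * V
          = cII * (α * lam * (X * Y + U * V) - α * lam ^ 2 * X * U -
              (lam ^ 2 + α) * X * V + lam ^ 2 * Y * V)) ∧
        -- master (III) with β = η = −1, δ = h, ε = 1/α
        (((-1) * (-1) - h * (1 / α)) * lam * (X * Y + U * V) -
            (-1) * h * ((1 / α) * lam ^ 2 - (-1)) * X * U +
            (1 / α) * (-1) * ((-1) * lam ^ 2 - h) * X * V +
            ((-1) * lam ^ 2 - h) * Y * U - ((1 / α) * lam ^ 2 - (-1)) * Y * V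
          = cIII * ((h - α) * lam * (X * Y + U * V) -
              h * (lam ^ 2 + α) * X * U - (lam ^ 2 + h) * X * V +
              α * (lam ^ 2 + h) * Y * U + (lam ^ 2 + α) * Y * V)) := by
  refine ⟨1, -1/α, -1/α, one_ne_zero, by simp [hα], by simp [hα], fun X Y U V lam => ?_⟩
  refine ⟨by ring, ?_, ?_⟩ <;> field_simp <;> ring
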